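/- Let H be a real inner product space, let a, b ∈ H, let θ be a real number with 1/2 ≤ θ ≤ 1, and let r ≥ 0. If ⟨a − b, θa + (1 − θ)b⟩ ≤ r·‖θa + (1 − θ)b‖, then ‖a‖ ≤ ‖b‖ + r. -/

import Mathlib

/-- In a real inner product space, for `a, b`, `1/2 ≤ θ ≤ 1` and
`r ≥ 0`: if `⟨a − b, θa + (1 − θ)b⟩ ≤ r·‖θa + (1 − θ)b‖`, then
`‖a‖ ≤ ‖b‖ + r`. -/
theorem theta_scheme_norm_bound
    {H : Type*} [NormedAddCommGroup H] [InnerProductSpace ℝ H]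
    (a b : H) (θ : ℝ) (hθ1 : 1/2 ≤ θ) (hθ2 : θ ≤ 1) (r : ℝ) (hr : 0 ≤ r)
    (h : (inner ℝ (a - b) (θ • a + (1 - θ) • b) : ℝ)
          ≤ r * ‖θ • a + (1 - θ) • b‖) :
    ‖a‖ ≤ ‖b‖ + r := by
  have key : (inner ℝ (a - b) (θ • a + (1 - θ) • b) : ℝ)
      = θ * ‖a‖ ^ 2 - (1 - θ) * ‖b‖ ^ 2 + (1 - 2 * θ) * (inner ℝ a b : ℝ) := by
    simp only [inner_sub_left, inner_add_right, real_inner_smul_right,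
      real_inner_self_eq_norm_sq, real_inner_comm b a]
    ring
  have hab2 : ‖a - b‖ ^ 2 = ‖a‖ ^ 2 + ‖b‖ ^ 2 - 2 * (inner ℝ a b : ℝ) := by
    rw [@norm_sub_sq_real]; ring
  have E2 : ‖θ • a + (1 - θ) • b‖ ≤ θ * ‖a‖ + (1 - θ) * ‖b‖ := by
    calc ‖θ • a + (1 - θ) • b‖ ≤ ‖θ • a‖ + ‖(1 - θ) • b‖ := norm_add_le _ _
    _ = θ * ‖a‖ + (1 - θ) * ‖b‖ := by
        rw [norm_smul, norm_smul, Real.norm_eq_abs, Real.norm_eq_abs,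
          abs_of_nonneg (by linarith), abs_of_nonneg (by linarith)]
  have E3 : ‖a‖ - ‖b‖ ≤ ‖a - b‖ := norm_sub_norm_le a b
  have hm : 0 ≤ ‖θ • a + (1 - θ) • b‖ := norm_nonneg _
  have ha : 0 ≤ ‖a‖ := norm_nonneg a
  have hb : 0 ≤ ‖b‖ := norm_nonneg b
  have hE2' : r * ‖θ • a + (1 - θ) • b‖ ≤ r * (θ * ‖a‖ + (1 - θ) * ‖b‖) :=
    mul_le_mul_of_nonneg_left E2 hr
  by_contra hc
  push_neg at hc
  have star : ‖a‖ ^ 2 - ‖b‖ ^ 2 + (2 * θ - 1) * ‖a - b‖ ^ 2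
      ≤ 2 * r * (θ * ‖a‖ + (1 - θ) * ‖b‖) := by
    have hi : (inner ℝ a b : ℝ) = (‖a‖ ^ 2 + ‖b‖ ^ 2 - ‖a - b‖ ^ 2) / 2 := by
      linarith [hab2]
    have h2 := h.trans hE2'
    rw [key, hi] at h2
    nlinarith [h2]
  have hd : 0 ≤ ‖a‖ - ‖b‖ := by linarith
  have hD2 : (‖a‖ - ‖b‖) ^ 2 ≤ ‖a - b‖ ^ 2 := pow_le_pow_left₀ hd E3 2
  have hθ : (0:ℝ) ≤ 2 * θ - 1 := by linarith
  nlinarith [mul_le_mul_of_nonneg_left hD2 hθ,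
    mul_pos (by linarith : (0:ℝ) < ‖a‖ - ‖b‖ - r) (by linarith : (0:ℝ) < ‖a‖ + ‖b‖),
    mul_nonneg (mul_nonneg hθ (by linarith : (0:ℝ) ≤ ‖a‖ - ‖b‖)) (by linarith : (0:ℝ) ≤ ‖a‖ - ‖b‖ - r)]
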